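/- Let n ≥ 1, let f : ℝⁿ × ℝ → ℝⁿ be continuously differentiable, and let p : ℝⁿ × ℝ → ℝ be continuously differentiable and strictly positive satisfying ∂p/∂t = − div_z(p f). Let z : [0,1] → ℝⁿ be continuously differentiable with z'(t) = f(z(t), t). Then log p(z(1), 1) − log p(z(0), 0) = − ∫₀¹ (div_z f)(z(t), t) dt. (Total change in log-density along the flow; Equation (6) of the paper in the Euclidean case.) -/

import Mathlib

open Set intervalIntegral

/-- The Euclidean divergence `div g (z) = Σᵢ ∂gᵢ/∂zᵢ (z)`. -/
noncomputable def eucDiv {n : ℕ}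
    (g : EuclideanSpace ℝ (Fin n) → EuclideanSpace ℝ (Fin n))
    (z : EuclideanSpace ℝ (Fin n)) : ℝ :=
  ∑ i : Fin n, fderiv ℝ g z (EuclideanSpace.single i (1 : ℝ)) i

lemma clm_apply_eq_sum {n : ℕ} (A : EuclideanSpace ℝ (Fin n) →L[ℝ] ℝ)
    (v : EuclideanSpace ℝ (Fin n)) :
    A v = ∑ i : Fin n, v i * A (EuclideanSpace.single i 1) := by
  conv_lhs => rw [← (EuclideanSpace.basisFun (Fin n) ℝ).sum_repr v]
  rw [map_sum]
  simp [EuclideanSpace.basisFun_apply, EuclideanSpace.basisFun_repr, smul_eq_mul]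

/-- Equation (6) of the paper in the Euclidean case: the total change in
log-density along a trajectory of `f` equals minus the time-integral of the
divergence of `f` along the trajectory. -/
theorem stmt_7 (n : ℕ) (hn : 1 ≤ n)
    (f : EuclideanSpace ℝ (Fin n) × ℝ → EuclideanSpace ℝ (Fin n))
    (hf : ContDiff ℝ 1 f)
    (p : EuclideanSpace ℝ (Fin n) × ℝ → ℝ)
    (hp : ContDiff ℝ 1 p)
    (hppos : ∀ z t, 0 < p (z, t))
    (hliouville : ∀ (z : EuclideanSpace ℝ (Fin n)) (t : ℝ),
      deriv (fun s => p (z, s)) t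
        = - eucDiv (fun y => p (y, t) • f (y, t)) z)
    (z : ℝ → EuclideanSpace ℝ (Fin n))
    (hz : ∀ t ∈ Icc (0 : ℝ) 1, HasDerivAt z (f (z t, t)) t) :
    Real.log (p (z 1, 1)) - Real.log (p (z 0, 0))
      = - ∫ t in (0 : ℝ)..1, eucDiv (fun y => f (y, t)) (z t) := by
  have hpd : Differentiable ℝ p := hp.differentiable one_ne_zero
  have hfd : Differentiable ℝ f := hf.differentiable one_ne_zero
  -- partial derivatives in the space variable
  have hpt : ∀ (x : EuclideanSpace ℝ (Fin n)) (t : ℝ), HasFDerivAt (fun y => p (y, t))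
      ((fderiv ℝ p (x, t)).comp (ContinuousLinearMap.inl ℝ (EuclideanSpace ℝ (Fin n)) ℝ))
      x := fun x t =>
    (hpd (x, t)).hasFDerivAt.comp x (hasFDerivAt_prodMk_left x t)
  have hft : ∀ (x : EuclideanSpace ℝ (Fin n)) (t : ℝ), HasFDerivAt (fun y => f (y, t))
      ((fderiv ℝ f (x, t)).comp (ContinuousLinearMap.inl ℝ (EuclideanSpace ℝ (Fin n)) ℝ))
      x := fun x t =>
    (hfd (x, t)).hasFDerivAt.comp x (hasFDerivAt_prodMk_left x t)
  -- time partial derivative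
  have htime : ∀ (x : EuclideanSpace ℝ (Fin n)) (t : ℝ), HasDerivAt (fun s => p (x, s))
      (fderiv ℝ p (x, t) (0, 1)) t := fun x t => by
    have h1 : HasDerivAt (fun s : ℝ => ((x, s) : EuclideanSpace ℝ (Fin n) × ℝ))
        ((0 : EuclideanSpace ℝ (Fin n)), (1 : ℝ)) t :=
      (hasDerivAt_const t x).prodMk (hasDerivAt_id t)
    exact (hpd (x, t)).hasFDerivAt.comp_hasDerivAt t h1
  -- divergence product rule
  have hdiv : ∀ (x : EuclideanSpace ℝ (Fin n)) (t : ℝ),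
      eucDiv (fun y => p (y, t) • f (y, t)) x
        = fderiv ℝ (fun y => p (y, t)) x (f (x, t))
          + p (x, t) * eucDiv (fun y => f (y, t)) x := by
    intro x t
    have hps : DifferentiableAt ℝ (fun y => p (y, t)) x := (hpt x t).differentiableAt
    have hfs : DifferentiableAt ℝ (fun y => f (y, t)) x := (hft x t).differentiableAt
    unfold eucDiv
    rw [fderiv_fun_smul hps hfs]
    simp only [ContinuousLinearMap.add_apply, ContinuousLinearMap.smul_apply,
      ContinuousLinearMap.smulRight_apply, PiLp.add_apply, PiLp.smul_apply, smul_eq_mul]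
    rw [Finset.sum_add_distrib, ← Finset.mul_sum,
      clm_apply_eq_sum (fderiv ℝ (fun y => p (y, t)) x) (f (x, t))]
    rw [add_comm]
    congr 1
    exact Finset.sum_congr rfl fun i _ => by ring
  -- total derivative of log density along the trajectory
  have hlog : ∀ t ∈ Icc (0 : ℝ) 1,
      HasDerivAt (fun s => Real.log (p (z s, s)))
        (- eucDiv (fun y => f (y, t)) (z t)) t := by
    intro t ht
    have hzt := hz t ht
    have hc : HasDerivAt (fun s => ((z s, s) : EuclideanSpace ℝ (Fin n) × ℝ))
        (f (z t, t), 1) t := hzt.prodMk (hasDerivAt_id t)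
    have hq : HasDerivAt (fun s => p (z s, s)) (fderiv ℝ p (z t, t) (f (z t, t), 1)) t := by
      have hP : HasFDerivAt p (fderiv ℝ p (z t, t)) ((fun s => ((z s, s) : EuclideanSpace ℝ (Fin n) × ℝ)) t) :=
        (hpd (z t, t)).hasFDerivAt
      simpa [Function.comp_def] using (hP.comp (f := fun s => ((z s, s) : EuclideanSpace ℝ (Fin n) × ℝ)) t hc.hasFDerivAt).hasDerivAt
    have hsplit : fderiv ℝ p (z t, t) (f (z t, t), 1)
        = fderiv ℝ (fun y => p (y, t)) (z t) (f (z t, t))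
          + fderiv ℝ p (z t, t) ((0 : EuclideanSpace ℝ (Fin n)), (1 : ℝ)) := by
      have h2 : ((f (z t, t), (1 : ℝ)) : EuclideanSpace ℝ (Fin n) × ℝ)
          = (f (z t, t), 0) + (0, 1) := by simp
      rw [h2, map_add, (hpt (z t) t).fderiv]
      rfl
    have hval : fderiv ℝ p (z t, t) (f (z t, t), 1)
        = - p (z t, t) * eucDiv (fun y => f (y, t)) (z t) := by
      rw [hsplit, ← (htime (z t) t).deriv, hliouville (z t) t, hdiv (z t) t]
      ring
    have hq' : HasDerivAt (fun s => p (z s, s))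
        (- p (z t, t) * eucDiv (fun y => f (y, t)) (z t)) t := hval ▸ hq
    have hpne : p (z t, t) ≠ 0 := (hppos (z t) t).ne'
    have hlogd := hq'.log hpne
    have hrw : - p (z t, t) * eucDiv (fun y => f (y, t)) (z t) / p (z t, t)
        = - eucDiv (fun y => f (y, t)) (z t) := by
      field_simp
    rwa [hrw] at hlogd
  -- integrability of the divergence along the trajectory
  have hzc : ContinuousOn z (Icc (0 : ℝ) 1) := fun t ht =>
    (hz t ht).continuousAt.continuousWithinAt
  have hgform : ∀ (t : ℝ), eucDiv (fun y => f (y, t)) (z t)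
      = ∑ i : Fin n, fderiv ℝ f (z t, t) (EuclideanSpace.single i 1, 0) i := by
    intro t
    unfold eucDiv
    refine Finset.sum_congr rfl fun i _ => ?_
    rw [(hft (z t) t).fderiv]
    rfl
  have hgc : ContinuousOn (fun t => eucDiv (fun y => f (y, t)) (z t)) (Icc (0 : ℝ) 1) := by
    have h1 : ContinuousOn (fun t => ((z t, t) : EuclideanSpace ℝ (Fin n) × ℝ))
        (Icc (0 : ℝ) 1) := hzc.prodMk continuousOn_id
    have h2 : Continuous (fderiv ℝ f) := hf.continuous_fderiv one_ne_zero
    have h3 : ∀ i : Fin n, ContinuousOn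
        (fun t => fderiv ℝ f (z t, t) (EuclideanSpace.single i 1, 0) i) (Icc (0 : ℝ) 1) := by
      intro i
      have hev : Continuous (fun A : (EuclideanSpace ℝ (Fin n) × ℝ) →L[ℝ]
          EuclideanSpace ℝ (Fin n) => (A (EuclideanSpace.single i 1, 0)) i) :=
        (EuclideanSpace.proj i).continuous.comp
          (ContinuousLinearMap.apply ℝ (EuclideanSpace ℝ (Fin n))
            ((EuclideanSpace.single i 1 : EuclideanSpace ℝ (Fin n)), (0:ℝ))).continuous
      exact hev.comp_continuousOn (h2.comp_continuousOn h1)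
    have h4 : ContinuousOn
        (fun t => ∑ i : Fin n, fderiv ℝ f (z t, t) (EuclideanSpace.single i 1, 0) i)
        (Icc (0 : ℝ) 1) := continuousOn_finset_sum _ (fun i _ => h3 i)
    exact h4.congr fun t _ => hgform t
  have hint : IntervalIntegrable
      (fun t => - eucDiv (fun y => f (y, t)) (z t)) MeasureTheory.volume 0 1 := by
    apply ContinuousOn.intervalIntegrable
    rw [uIcc_of_le (by norm_num : (0:ℝ) ≤ 1)]
    exact hgc.neg
  have hkey := integral_eq_sub_of_hasDerivAt
    (f := fun s => Real.log (p (z s, s)))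
    (f' := fun t => - eucDiv (fun y => f (y, t)) (z t))
    (fun t ht => hlog t (by rwa [uIcc_of_le (by norm_num : (0:ℝ) ≤ 1)] at ht)) hint
  rw [intervalIntegral.integral_neg] at hkey
  linarith [hkey]
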